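/- For each natural number n and each θ ∈ (0, π/2), there exists a unique real number r in the open interval (nπ, (n+1)π) such that r·cot(r) = −cot(θ). -/

import Mathlib

open Real Set Filter Topology

lemma key_unique_root (c t : ℝ) (hc : 0 ≤ c) (ht : t < 0) :
    ∃! s : ℝ, s ∈ Ioo (0:ℝ) π ∧ (c + s) * (Real.cos s / Real.sin s) = t := by
  have hπ := Real.pi_pos
  set g : ℝ → ℝ := fun s => (c + s) * (Real.cos s / Real.sin s) with hg
  have hsin : ∀ s ∈ Ioo (0:ℝ) π, 0 < Real.sin s := fun s hs =>
    Real.sin_pos_of_pos_of_lt_pi hs.1 hs.2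
  have hcont : ContinuousOn g (Ioo 0 π) := by
    apply ContinuousOn.mul (by fun_prop)
    exact ContinuousOn.div (by fun_prop) (by fun_prop) (fun s hs => (hsin s hs).ne')
  have hderiv : ∀ s ∈ Ioo (0:ℝ) π,
      HasDerivAt g ((Real.cos s * Real.sin s - (c + s)) / Real.sin s ^ 2) s := by
    intro s hs
    have h1 : HasDerivAt (fun x => (c + x) * Real.cos x)
        (1 * Real.cos s + (c + s) * (-Real.sin s)) s :=
      ((hasDerivAt_id s).const_add c).mul (Real.hasDerivAt_cos s)
    have h2 := h1.div (Real.hasDerivAt_sin s) (hsin s hs).ne'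
    have hfun : g = fun x => ((c + x) * Real.cos x) / Real.sin x := by
      funext x; rw [hg]; rw [mul_div_assoc]
    rw [hfun]
    convert h2 using 1
    · rfl
    case e'_5 => rfl
    case e'_8 => rfl
    case e'_9 =>
    have hpy := Real.sin_sq_add_cos_sq s
    congr 1
    linear_combination (c + s) * hpy
  have hanti : StrictAntiOn g (Ioo 0 π) := by
    apply strictAntiOn_of_deriv_neg (convex_Ioo _ _) hcont
    rw [interior_Ioo]
    intro x hx
    rw [(hderiv x hx).deriv]
    apply div_neg_of_neg_of_pos
    · have h2x : Real.sin (2 * x) < 2 * x := Real.sin_lt (by linarith [hx.1])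
      rw [Real.sin_two_mul] at h2x
      nlinarith
    · exact pow_pos (hsin x hx) 2
  -- g (π/2) = 0
  have hg0 : g (π / 2) = 0 := by simp [hg]
  -- limit atBot at π from the left
  have hA : Tendsto (fun s => (c + s) * Real.cos s) (𝓝[<] π) (𝓝 (-(c + π))) := by
    have h : Continuous (fun s : ℝ => (c + s) * Real.cos s) := by fun_prop
    have h2 : Tendsto (fun s : ℝ => (c + s) * Real.cos s) (𝓝 π) (𝓝 ((c + π) * Real.cos π)) :=
      h.tendsto π
    rw [Real.cos_pi, mul_neg_one] at h2
    exact h2.mono_left nhdsWithin_le_nhds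
  have hIoo : Ioo 0 π ∈ 𝓝[<] π := Ioo_mem_nhdsLT hπ
  have hB : Tendsto Real.sin (𝓝[<] π) (𝓝[>] 0) := by
    apply tendsto_nhdsWithin_of_tendsto_nhds_of_eventually_within
    · have h := Real.continuous_sin.tendsto π
      rw [Real.sin_pi] at h
      exact h.mono_left nhdsWithin_le_nhds
    · filter_upwards [hIoo] with s hs
      exact hsin s hs
  have hC : Tendsto (fun s => (Real.sin s)⁻¹) (𝓝[<] π) atTop :=
    tendsto_inv_nhdsGT_zero.comp hB
  have hD : Tendsto g (𝓝[<] π) atBot := by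
    have h := Filter.Tendsto.neg_mul_atTop (show -(c + π) < 0 by linarith) hA hC
    apply h.congr
    intro x
    simp only [hg, div_eq_mul_inv, mul_assoc]
  have hev : ∀ᶠ s in 𝓝[<] π, g s < t := hD.eventually (eventually_lt_atBot t)
  have hmem : ∀ᶠ s in 𝓝[<] π, s ∈ Ioo (π/2) π :=
    Ioo_mem_nhdsLT (by linarith)
  obtain ⟨b, hb1, hb2⟩ := (hev.and hmem).exists
  have hsub : Icc (π/2) b ⊆ Ioo 0 π := fun x hx =>
    ⟨by linarith [hx.1], lt_of_le_of_lt hx.2 hb2.2⟩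
  have hIvt := intermediate_value_Icc' (le_of_lt hb2.1) (hcont.mono hsub)
  have ht' : t ∈ Icc (g b) (g (π/2)) := ⟨le_of_lt hb1, by rw [hg0]; linarith⟩
  obtain ⟨s, hs, hgs⟩ := hIvt ht'
  refine ⟨s, ⟨hsub hs, hgs⟩, ?_⟩
  intro y ⟨hy1, hy2⟩
  exact hanti.injOn hy1 (hsub hs) (by rw [hgs]; exact hy2)

theorem unique_root_r_cot_eq_neg_cot
    (n : ℕ) (θ : ℝ) (hθ : θ ∈ Ioo 0 (π / 2)) :
    ∃! r : ℝ, r ∈ Ioo (n * π) ((n + 1) * π) ∧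
      r * (Real.cos r / Real.sin r) = -(Real.cos θ / Real.sin θ) := by
  have hπ := Real.pi_pos
  set t : ℝ := -(Real.cos θ / Real.sin θ) with htdef
  have hcosθ : 0 < Real.cos θ := Real.cos_pos_of_mem_Ioo ⟨by linarith [hθ.1], hθ.2⟩
  have hsinθ : 0 < Real.sin θ := Real.sin_pos_of_pos_of_lt_pi hθ.1 (by linarith [hθ.2])
  have ht : t < 0 := by
    have := div_pos hcosθ hsinθ
    rw [htdef]; linarith
  obtain ⟨s, ⟨hs, hgs⟩, huniq⟩ := key_unique_root (n * π) t (by positivity) ht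
  have hper : ∀ x : ℝ, Real.cos (x + n * π) / Real.sin (x + n * π)
      = Real.cos x / Real.sin x := by
    have h : Function.Periodic (fun x => Real.cos x / Real.sin x) π := by
      intro x
      simp [Real.cos_add_pi, Real.sin_add_pi, neg_div_neg_eq]
    exact h.nat_mul n
  have hexp : ((n:ℝ) + 1) * π = n * π + π := by ring
  refine ⟨s + n * π, ⟨?_, ?_⟩, ?_⟩
  · rw [mem_Ioo, hexp]
    constructor <;> linarith [hs.1, hs.2]
  · rw [hper s]
    rw [add_comm s ((n:ℝ) * π)] 
    exact hgs
  · rintro r ⟨hr, heq⟩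
    have hpr := hper (r - n * π)
    rw [sub_add_cancel] at hpr
    have hrmem : r - n * π ∈ Ioo (0:ℝ) π := by
      rw [mem_Ioo, hexp] at hr
      exact ⟨by linarith [hr.1], by linarith [hr.2]⟩
    have heq' : ((n:ℝ) * π + (r - n * π)) * (Real.cos (r - n*π) / Real.sin (r - n*π)) = t := by
      have hco : (n:ℝ) * π + (r - n * π) = r := by ring
      rw [hco, ← hpr]
      exact heq
    have := huniq (r - n * π) ⟨hrmem, heq'⟩
    linarith [this]
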